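/- arXiv:1907.05835 — 2 statements merged into one kernel-verified Lean document; each statement's English description precedes it below -/
import Mathlib

section
/- Let x, y ∈ 𝒞 with x ≠ y and let k be the first index where they differ. For any finite nonempty F ⊆ ℕ with max F > k: (∏_{m∈F} u_m)(x) - (∏_{m∈F} u_m)(y) = 0 if and only if (∏_{m∈F△{k}} u_m)(x) - (∏_{m∈F△{k}} u_m)(y) ∈ {-2,2}, where △ denotes symmetric difference. -/
open scoped ENNReal

abbrev Cantor : Type := ℕ → Fin 2

noncomputable def u (n : ℕ) (x : Cantor) : ℂ := 2 * ((x n : ℕ) : ℂ) - 1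

noncomputable def firstDiff (x y : Cantor) (h : x ≠ y) : ℕ :=
  Nat.find (Function.ne_iff.mp h)

open Classical in
noncomputable def dC (x y : Cantor) : ℝ≥0∞ :=
  if h : x = y then 0 else 2⁻¹ ^ firstDiff x y h

noncomputable def LipC (f : Cantor → ℂ) : ℝ≥0∞ :=
  ⨆ (x : Cantor) (y : Cantor) (_ : x ≠ y),
    ENNReal.ofReal (‖f x - f y‖) / dC x y

theorem prod_u_sub_eq_zero_iff_symmDiff (x y : Cantor) (h : x ≠ y)
    (F : Finset ℕ) (hF : F.Nonempty) (hmax : firstDiff x y h < F.max' hF) :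
    (∏ m ∈ F, u m x) - (∏ m ∈ F, u m y) = 0 ↔
      (∏ m ∈ symmDiff F {firstDiff x y h}, u m x) -
        (∏ m ∈ symmDiff F {firstDiff x y h}, u m y) ∈ ({-2, 2} : Set ℂ) := by
  set k := firstDiff x y h with hkdef
  have hxy : x k ≠ y k := Nat.find_spec (Function.ne_iff.mp h)
  have hu : ∀ (m : ℕ) (z : Cantor), u m z = 1 ∨ u m z = -1 := by
    intro m z
    have hlt : (z m : ℕ) < 2 := (z m).isLt
    have : (z m : ℕ) = 0 ∨ (z m : ℕ) = 1 := by omega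
    rcases this with h' | h' <;> simp [u, h'] <;> ring_nf <;> norm_num
  have hky : u k y = -u k x := by
    have h1 : (x k : ℕ) < 2 := (x k).isLt
    have h2 : (y k : ℕ) < 2 := (y k).isLt
    have h3 : (x k : ℕ) ≠ (y k : ℕ) := fun hc => hxy (Fin.ext hc)
    have : ((x k : ℕ) = 0 ∧ (y k : ℕ) = 1) ∨ ((x k : ℕ) = 1 ∧ (y k : ℕ) = 0) := by omega
    rcases this with ⟨e1, e2⟩ | ⟨e1, e2⟩ <;> simp [u, e1, e2] <;> ring
  have uk2 : ∀ z : Cantor, u k z * u k z = 1 := by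
    intro z; rcases hu k z with h' | h' <;> rw [h'] <;> ring
  have sq : ∀ z : Cantor, (∏ m ∈ F, u m z) * (∏ m ∈ F, u m z) = 1 := by
    intro z
    rw [← Finset.prod_mul_distrib]
    apply Finset.prod_eq_one
    intro m _
    rcases hu m z with h' | h' <;> rw [h'] <;> ring
  have hsd : ∀ z : Cantor, ∏ m ∈ symmDiff F {k}, u m z = u k z * ∏ m ∈ F, u m z := by
    intro z
    by_cases hk : k ∈ F
    · have e1 : symmDiff F {k} = F.erase k := by
        ext m
        simp [Finset.mem_symmDiff, Finset.mem_erase]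
        constructor
        · rintro (⟨hm, hne⟩ | ⟨rfl, hnm⟩)
          · exact ⟨hne, hm⟩
          · exact absurd hk hnm
        · rintro ⟨hne, hm⟩; exact Or.inl ⟨hm, hne⟩
      rw [e1]
      have e2 : ∏ m ∈ F, u m z = u k z * ∏ m ∈ F.erase k, u m z :=
        (Finset.mul_prod_erase F _ hk).symm
      rw [e2, ← mul_assoc, uk2 z, one_mul]
    · have e1 : symmDiff F {k} = insert k F := by
        ext m
        simp [Finset.mem_symmDiff, Finset.mem_insert]
        constructor
        · rintro (⟨hm, hne⟩ | ⟨rfl, _⟩)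
          · exact Or.inr hm
          · exact Or.inl rfl
        · rintro (rfl | hm)
          · exact Or.inr ⟨rfl, hk⟩
          · exact Or.inl ⟨hm, fun hc => hk (hc ▸ hm)⟩
      rw [e1, Finset.prod_insert hk]
  rw [hsd x, hsd y, hky]
  rcases mul_self_eq_one_iff.mp (sq x) with ha | ha <;>
    rcases mul_self_eq_one_iff.mp (sq y) with hb | hb <;>
    rcases mul_self_eq_one_iff.mp (uk2 x) with hc | hc <;>
    rw [ha, hb, hc] <;> norm_num [Set.mem_insert_iff]
end

section
/- Let f : 𝒞 → ℂ be given by f = α_0 u_0 + α_1 u_1 + α_2 u_0 u_1 with α_0, α_1, α_2 ∈ ℂ. Then the Lipschitz seminorm of f with respect to the Cantor metric equals max{2|α_0-α_2|, 2|α_0-α_1|, 2|α_0+α_1|, 2|α_0+α_2|, 4|α_1-α_2|, 4|α_1+α_2|}. -/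
open scoped ENNReal

lemma fin2_cases (a : Fin 2) : a = 0 ∨ a = 1 := by omega

lemma u_zero {n : ℕ} {x : Cantor} (h : x n = 0) : u n x = -1 := by
  simp [u, h]

lemma u_one {n : ℕ} {x : Cantor} (h : x n = 1) : u n x = 1 := by
  norm_num [u, h]

lemma abs_case {z β : ℂ} {M : ℝ} (hM : 2 * ‖β‖ ≤ M)
    (hz : z = 2 * β ∨ z = -(2 * β)) : ‖z‖ ≤ M := by
  rcases hz with h | h
  · rw [h, norm_mul, Complex.norm_two]; exact hM
  · rw [h, norm_neg, norm_mul, Complex.norm_two]; exact hM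

lemma abs_case2 {z β : ℂ} {M : ℝ} (hM : 4 * ‖β‖ ≤ M)
    (hz : z = 2 * β ∨ z = -(2 * β)) : 2 * ‖z‖ ≤ M := by
  rcases hz with h | h
  · rw [h, norm_mul, Complex.norm_two]; linarith
  · rw [h, norm_neg, norm_mul, Complex.norm_two]; linarith

lemma dC_eq (x y : Cantor) (h : x ≠ y) (m : ℕ) (hm : x m ≠ y m)
    (hlt : ∀ k < m, x k = y k) : dC x y = 2⁻¹ ^ m := by
  rw [dC, dif_neg h]
  congr 1
  rw [firstDiff, Nat.find_eq_iff]
  exact ⟨hm, fun k hk h' => h' (hlt k hk)⟩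

lemma le_LipC (f : Cantor → ℂ) (x y : Cantor) (h : x ≠ y) :
    ENNReal.ofReal (‖f x - f y‖) / dC x y ≤ LipC f :=
  le_iSup_of_le x (le_iSup_of_le y (le_iSup_of_le h le_rfl))

theorem lip_A2_formula (α₀ α₁ α₂ : ℂ) :
    LipC (fun x => α₀ * u 0 x + α₁ * u 1 x + α₂ * (u 0 x * u 1 x)) =
      ENNReal.ofReal
        (max (max (max (2 * ‖α₀ - α₂‖) (2 * ‖α₀ - α₁‖))
          (max (2 * ‖α₀ + α₁‖) (2 * ‖α₀ + α₂‖)))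
          (max (4 * ‖α₁ - α₂‖) (4 * ‖α₁ + α₂‖))) := by
  set f : Cantor → ℂ := fun x => α₀ * u 0 x + α₁ * u 1 x + α₂ * (u 0 x * u 1 x) with hf
  set M : ℝ := max (max (max (2 * ‖α₀ - α₂‖) (2 * ‖α₀ - α₁‖))
      (max (2 * ‖α₀ + α₁‖) (2 * ‖α₀ + α₂‖)))
      (max (4 * ‖α₁ - α₂‖) (4 * ‖α₁ + α₂‖)) with hM
  have hA : 2 * ‖α₀ - α₂‖ ≤ M :=
    le_max_of_le_left (le_max_of_le_left (le_max_left _ _))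
  have hB : 2 * ‖α₀ - α₁‖ ≤ M :=
    le_max_of_le_left (le_max_of_le_left (le_max_right _ _))
  have hC : 2 * ‖α₀ + α₁‖ ≤ M :=
    le_max_of_le_left (le_max_of_le_right (le_max_left _ _))
  have hD : 2 * ‖α₀ + α₂‖ ≤ M :=
    le_max_of_le_left (le_max_of_le_right (le_max_right _ _))
  have hE : 4 * ‖α₁ - α₂‖ ≤ M :=
    le_max_of_le_right (le_max_left _ _)
  have hF : 4 * ‖α₁ + α₂‖ ≤ M :=
    le_max_of_le_right (le_max_right _ _)
  apply le_antisymm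
  · -- upper bound
    rw [LipC]
    refine iSup_le fun x => iSup_le fun y => iSup_le fun hxy => ?_
    have hm : x (firstDiff x y hxy) ≠ y (firstDiff x y hxy) :=
      Nat.find_spec (Function.ne_iff.mp hxy)
    have hlt : ∀ k < firstDiff x y hxy, x k = y k := fun k hk =>
      not_ne_iff.mp (Nat.find_min (Function.ne_iff.mp hxy) hk)
    rw [dC, dif_neg hxy]
    cases hmm : firstDiff x y hxy with
    | zero =>
      rw [hmm] at hm
      rw [pow_zero, div_one]
      apply ENNReal.ofReal_le_ofReal
      rcases fin2_cases (x 0) with h0 | h0 <;> rcases fin2_cases (y 0) with h0' | h0' <;>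
        [skip; skip; skip; skip] <;>
        first
        | (exact absurd (h0.trans h0'.symm) hm)
        | (rcases fin2_cases (x 1) with h1 | h1 <;> rcases fin2_cases (y 1) with h1' | h1')
      -- x0=0,y0=1
      · exact abs_case hA (Or.inr (by rw [hf]; simp only []; rw [u_zero h0, u_one h0', u_zero h1, u_zero h1']; ring))
      · exact abs_case hC (Or.inr (by rw [hf]; simp only []; rw [u_zero h0, u_one h0', u_zero h1, u_one h1']; ring))
      · exact abs_case hB (Or.inr (by rw [hf]; simp only []; rw [u_zero h0, u_one h0', u_one h1, u_zero h1']; ring))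
      · exact abs_case hD (Or.inr (by rw [hf]; simp only []; rw [u_zero h0, u_one h0', u_one h1, u_one h1']; ring))
      -- x0=1,y0=0
      · exact abs_case hA (Or.inl (by rw [hf]; simp only []; rw [u_one h0, u_zero h0', u_zero h1, u_zero h1']; ring))
      · exact abs_case hB (Or.inl (by rw [hf]; simp only []; rw [u_one h0, u_zero h0', u_zero h1, u_one h1']; ring))
      · exact abs_case hC (Or.inl (by rw [hf]; simp only []; rw [u_one h0, u_zero h0', u_one h1, u_zero h1']; ring))
      · exact abs_case hD (Or.inl (by rw [hf]; simp only []; rw [u_one h0, u_zero h0', u_one h1, u_one h1']; ring))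
    | succ n =>
      cases n with
      | zero =>
        rw [hmm] at hm hlt
        have h00 : x 0 = y 0 := hlt 0 Nat.one_pos
        rw [pow_one, div_eq_mul_inv, inv_inv]
        have habs : 0 ≤ ‖f x - f y‖ := norm_nonneg _
        rw [show (2 : ℝ≥0∞) = ENNReal.ofReal 2 by simp, ← ENNReal.ofReal_mul habs]
        apply ENNReal.ofReal_le_ofReal
        rw [mul_comm]
        rcases fin2_cases (x 1) with h1 | h1 <;> rcases fin2_cases (y 1) with h1' | h1' <;>
          [exact absurd (h1.trans h1'.symm) hm; skip; skip;
            exact absurd (h1.trans h1'.symm) hm] <;>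
          rcases fin2_cases (x 0) with h0 | h0
        -- x1=0,y1=1
        · exact abs_case2 hE (Or.inr (by rw [hf]; simp only []; rw [u_zero h0, u_zero (x := y) (n := 0) (h00.symm.trans h0), u_zero h1, u_one h1']; ring))
        · exact abs_case2 hF (Or.inr (by rw [hf]; simp only []; rw [u_one h0, u_one (x := y) (n := 0) (h00.symm.trans h0), u_zero h1, u_one h1']; ring))
        -- x1=1,y1=0
        · exact abs_case2 hE (Or.inl (by rw [hf]; simp only []; rw [u_zero h0, u_zero (x := y) (n := 0) (h00.symm.trans h0), u_one h1, u_zero h1']; ring))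
        · exact abs_case2 hF (Or.inl (by rw [hf]; simp only []; rw [u_one h0, u_one (x := y) (n := 0) (h00.symm.trans h0), u_one h1, u_zero h1']; ring))
      | succ k =>
        rw [hmm] at hlt
        have h00 : x 0 = y 0 := hlt 0 (by omega)
        have h11 : x 1 = y 1 := hlt 1 (by omega)
        have : f x = f y := by rw [hf]; simp only [u, h00, h11]
        rw [this, sub_self, norm_zero, ENNReal.ofReal_zero, ENNReal.zero_div]
        exact zero_le
  · -- lower bound
    have distrib : ∀ a b : ℝ, ENNReal.ofReal (max a b)
        = max (ENNReal.ofReal a) (ENNReal.ofReal b) :=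
      fun a b => Monotone.map_max (fun _ _ h => ENNReal.ofReal_le_ofReal h)
    rw [hM, distrib, distrib, distrib, distrib, distrib]
    -- generic witness lemma, firstDiff 0
    have wit0 : ∀ (x y : Cantor) (β : ℂ), x 0 ≠ y 0 → f x - f y = 2 * β →
        ENNReal.ofReal (2 * ‖β‖) ≤ LipC f := by
      intro x y β hne hdiff
      have hxy : x ≠ y := fun h => hne (congrFun h 0)
      have hd : dC x y = 1 := by
        rw [dC_eq x y hxy 0 hne (fun k hk => absurd hk (Nat.not_lt_zero k)), pow_zero]
      have := le_LipC f x y hxy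
      rwa [hd, div_one, hdiff, norm_mul, Complex.norm_two] at this
    have wit1 : ∀ (x y : Cantor) (β : ℂ), x 0 = y 0 → x 1 ≠ y 1 → f x - f y = 2 * β →
        ENNReal.ofReal (4 * ‖β‖) ≤ LipC f := by
      intro x y β h0 hne hdiff
      have hxy : x ≠ y := fun h => hne (congrFun h 1)
      have hd : dC x y = 2⁻¹ := by
        rw [dC_eq x y hxy 1 hne (fun k hk => by simpa [Nat.lt_one_iff.mp hk] using h0), pow_one]
      have := le_LipC f x y hxy
      rw [hd, div_eq_mul_inv, inv_inv, hdiff, norm_mul, Complex.norm_two] at this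
      calc ENNReal.ofReal (4 * ‖β‖)
          = ENNReal.ofReal (2 * ‖β‖) * 2 := by
            rw [show (4:ℝ)*‖β‖ = 2*‖β‖ * 2 by ring,
              ENNReal.ofReal_mul (by positivity), ENNReal.ofReal_ofNat]
        _ ≤ LipC f := this
    refine max_le (max_le (max_le ?_ ?_) (max_le ?_ ?_)) (max_le ?_ ?_)
    · -- 2|α₀ - α₂| : x = (1,0,...), y = (0,0,...)
      refine wit0 (fun n => if n = 0 then 1 else 0) (fun _ => 0) (α₀ - α₂) (by norm_num) ?_
      rw [hf]; simp only []
      rw [u_one (x := fun n => if n = 0 then 1 else 0) (n := 0) (by norm_num),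
        u_zero (x := fun n => if n = 0 then 1 else 0) (n := 1) (by norm_num),
        u_zero (x := fun _ => 0) (n := 0) rfl, u_zero (x := fun _ => 0) (n := 1) rfl]
      ring
    · -- 2|α₀ - α₁| : x = (1,0,...), y = (0,1,...)
      refine wit0 (fun n => if n = 0 then 1 else 0) (fun n => if n = 1 then 1 else 0)
        (α₀ - α₁) (by norm_num) ?_
      rw [hf]; simp only []
      rw [u_one (x := fun n => if n = 0 then 1 else 0) (n := 0) (by norm_num),
        u_zero (x := fun n => if n = 0 then 1 else 0) (n := 1) (by norm_num),
        u_zero (x := fun n => if n = 1 then 1 else 0) (n := 0) (by norm_num),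
        u_one (x := fun n => if n = 1 then 1 else 0) (n := 1) (by norm_num)]
      ring
    · -- 2|α₀ + α₁| : x = (1,1,...), y = (0,0,...)
      refine wit0 (fun _ => 1) (fun _ => 0) (α₀ + α₁) (by norm_num) ?_
      rw [hf]; simp only []
      rw [u_one (x := fun _ => 1) (n := 0) rfl, u_one (x := fun _ => 1) (n := 1) rfl,
        u_zero (x := fun _ => 0) (n := 0) rfl, u_zero (x := fun _ => 0) (n := 1) rfl]
      ring
    · -- 2|α₀ + α₂| : x = (1,1,...), y = (0,1,...)
      refine wit0 (fun _ => 1) (fun n => if n = 0 then 0 else 1) (α₀ + α₂) (by norm_num) ?_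
      rw [hf]; simp only []
      rw [u_one (x := fun _ => 1) (n := 0) rfl, u_one (x := fun _ => 1) (n := 1) rfl,
        u_zero (x := fun n => if n = 0 then 0 else 1) (n := 0) (by norm_num),
        u_one (x := fun n => if n = 0 then 0 else 1) (n := 1) (by norm_num)]
      ring
    · -- 4|α₁ - α₂| : x = (0,1,...), y = (0,0,...)
      refine wit1 (fun n => if n = 1 then 1 else 0) (fun _ => 0) (α₁ - α₂)
        (by norm_num) (by norm_num) ?_
      rw [hf]; simp only []
      rw [u_zero (x := fun n => if n = 1 then 1 else 0) (n := 0) (by norm_num),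
        u_one (x := fun n => if n = 1 then 1 else 0) (n := 1) (by norm_num),
        u_zero (x := fun _ => 0) (n := 0) rfl, u_zero (x := fun _ => 0) (n := 1) rfl]
      ring
    · -- 4|α₁ + α₂| : x = (1,1,...), y = (1,0,...)
      refine wit1 (fun _ => 1) (fun n => if n = 1 then 0 else 1) (α₁ + α₂)
        (by norm_num) (by norm_num) ?_
      rw [hf]; simp only []
      rw [u_one (x := fun _ => 1) (n := 0) rfl, u_one (x := fun _ => 1) (n := 1) rfl,
        u_one (x := fun n => if n = 1 then 0 else 1) (n := 0) (by norm_num),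
        u_zero (x := fun n => if n = 1 then 0 else 1) (n := 1) (by norm_num)]
      ring
end
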